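/- Let 𝒟 be an inclusion-closed collection of families of nonempty subsets of X. Suppose K ∈ 𝒟 is a closed measurable 𝒟-pullback absorbing set for Φ and Φ is 𝒟-pullback asymptotically compact in X. Then Φ has a unique 𝒟-pullback attractor 𝒜 ∈ 𝒟, given for all ω₁ ∈ Ω₁ and ω₂ ∈ Ω₂ by 𝒜(ω₁,ω₂) = Ω(K,ω₁,ω₂) = ⋂_{τ≥0} cl(⋃_{t≥τ} Φ(t,θ₁(−t)ω₁,θ₂(−t)ω₂,K(θ₁(−t)ω₁,θ₂(−t)ω₂))). -/

import Mathlib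

open MeasureTheory Filter Set Topology
open scoped ENNReal

namespace RDS

/-- A group of transformations of `α` parametrized by `ℝ`. -/
def IsGroupAction {α : Type*} (θ : ℝ → α → α) : Prop :=
  (∀ a, θ 0 a = a) ∧ ∀ s t : ℝ, ∀ a, θ (s + t) a = θ t (θ s a)

variable {Ω₁ Ω₂ X : Type*} [MetricSpace X] [MeasurableSpace X] [MeasurableSpace Ω₂]

/-- A continuous cocycle on `X` over the parametric dynamical systems
`(Ω₁, θ₁)` and `(Ω₂, ℱ₂, P, θ₂)` (Definition 2.1). -/
structure IsCocycle (θ₁ : ℝ → Ω₁ → Ω₁) (θ₂ : ℝ → Ω₂ → Ω₂)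
    (Φ : ℝ → Ω₁ → Ω₂ → X → X) : Prop where
  measurable : ∀ ω₁ : Ω₁,
    Measurable fun p : {t : ℝ // 0 ≤ t} × Ω₂ × X => Φ p.1.1 ω₁ p.2.1 p.2.2
  map_zero : ∀ (ω₁ : Ω₁) (ω₂ : Ω₂) (x : X), Φ 0 ω₁ ω₂ x = x
  cocycle : ∀ t τ : ℝ, 0 ≤ t → 0 ≤ τ → ∀ (ω₁ : Ω₁) (ω₂ : Ω₂) (x : X),
    Φ (t + τ) ω₁ ω₂ x = Φ t (θ₁ τ ω₁) (θ₂ τ ω₂) (Φ τ ω₁ ω₂ x)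
  continuous : ∀ t : ℝ, 0 ≤ t → ∀ (ω₁ : Ω₁) (ω₂ : Ω₂),
    Continuous fun x : X => Φ t ω₁ ω₂ x

/-- A complete orbit of the cocycle `Φ` (Definition 2.9). -/
def IsCompleteOrbit (θ₁ : ℝ → Ω₁ → Ω₁) (θ₂ : ℝ → Ω₂ → Ω₂)
    (Φ : ℝ → Ω₁ → Ω₂ → X → X) (ψ : ℝ → Ω₁ → Ω₂ → X) : Prop :=
  ∀ t τ : ℝ, 0 ≤ t → ∀ (ω₁ : Ω₁) (ω₂ : Ω₂),
    Φ t (θ₁ τ ω₁) (θ₂ τ ω₂) (ψ τ ω₁ ω₂) = ψ (t + τ) ω₁ ω₂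

/-- A `𝒟`-complete orbit of `Φ`. -/
def IsDCompleteOrbit (θ₁ : ℝ → Ω₁ → Ω₁) (θ₂ : ℝ → Ω₂ → Ω₂)
    (Φ : ℝ → Ω₁ → Ω₂ → X → X) (𝒟 : Set (Ω₁ → Ω₂ → Set X))
    (ψ : ℝ → Ω₁ → Ω₂ → X) : Prop :=
  IsCompleteOrbit θ₁ θ₂ Φ ψ ∧
    ∃ D ∈ 𝒟, ∀ (t : ℝ) (ω₁ : Ω₁) (ω₂ : Ω₂), ψ t ω₁ ω₂ ∈ D (θ₁ t ω₁) (θ₂ t ω₂)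

/-- Positive invariance of a family under `Φ`. -/
def PositivelyInvariant (θ₁ : ℝ → Ω₁ → Ω₁) (θ₂ : ℝ → Ω₂ → Ω₂)
    (Φ : ℝ → Ω₁ → Ω₂ → X → X) (B : Ω₁ → Ω₂ → Set X) : Prop :=
  ∀ t : ℝ, 0 ≤ t → ∀ (ω₁ : Ω₁) (ω₂ : Ω₂),
    Φ t ω₁ ω₂ '' B ω₁ ω₂ ⊆ B (θ₁ t ω₁) (θ₂ t ω₂)

/-- Invariance of a family under `Φ`. -/
def Invariant (θ₁ : ℝ → Ω₁ → Ω₁) (θ₂ : ℝ → Ω₂ → Ω₂)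
    (Φ : ℝ → Ω₁ → Ω₂ → X → X) (B : Ω₁ → Ω₂ → Set X) : Prop :=
  ∀ t : ℝ, 0 ≤ t → ∀ (ω₁ : Ω₁) (ω₂ : Ω₂),
    Φ t ω₁ ω₂ '' B ω₁ ω₂ = B (θ₁ t ω₁) (θ₂ t ω₂)

/-- Quasi-invariance of a family under `Φ`. -/
def QuasiInvariant (θ₁ : ℝ → Ω₁ → Ω₁) (θ₂ : ℝ → Ω₂ → Ω₂)
    (Φ : ℝ → Ω₁ → Ω₂ → X → X) (B : Ω₁ → Ω₂ → Set X) : Prop :=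
  ∀ y : Ω₁ → Ω₂ → X, (∀ (ω₁ : Ω₁) (ω₂ : Ω₂), y ω₁ ω₂ ∈ B ω₁ ω₂) →
    ∃ ψ : ℝ → Ω₁ → Ω₂ → X, IsCompleteOrbit θ₁ θ₂ Φ ψ ∧
      (∀ (ω₁ : Ω₁) (ω₂ : Ω₂), ψ 0 ω₁ ω₂ = y ω₁ ω₂) ∧
      ∀ (t : ℝ) (ω₁ : Ω₁) (ω₂ : Ω₂), ψ t ω₁ ω₂ ∈ B (θ₁ t ω₁) (θ₂ t ω₂)

/-- The Ω-limit set of a family `B` (Definition 2.13). -/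
def omegaLimit (θ₁ : ℝ → Ω₁ → Ω₁) (θ₂ : ℝ → Ω₂ → Ω₂)
    (Φ : ℝ → Ω₁ → Ω₂ → X → X) (B : Ω₁ → Ω₂ → Set X) (ω₁ : Ω₁) (ω₂ : Ω₂) : Set X :=
  ⋂ τ ∈ Ici (0 : ℝ), closure (⋃ t ∈ Ici τ,
    Φ t (θ₁ (-t) ω₁) (θ₂ (-t) ω₂) '' B (θ₁ (-t) ω₁) (θ₂ (-t) ω₂))

/-- `𝒟` is a collection of families of nonempty subsets of `X`. -/
def FamiliesOfNonemptySets (𝒟 : Set (Ω₁ → Ω₂ → Set X)) : Prop :=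
  ∀ D ∈ 𝒟, ∀ (ω₁ : Ω₁) (ω₂ : Ω₂), (D ω₁ ω₂).Nonempty

/-- Neighborhood closedness of the collection `𝒟` (Definition 2.5). -/
def NeighborhoodClosed (𝒟 : Set (Ω₁ → Ω₂ → Set X)) : Prop :=
  ∀ D ∈ 𝒟, ∃ ε : ℝ, 0 < ε ∧ ∀ B : Ω₁ → Ω₂ → Set X,
    (∀ (ω₁ : Ω₁) (ω₂ : Ω₂), (B ω₁ ω₂).Nonempty ∧
      B ω₁ ω₂ ⊆ Metric.thickening ε (D ω₁ ω₂)) → B ∈ 𝒟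

/-- Inclusion closedness of the collection `𝒟`. -/
def InclusionClosed (𝒟 : Set (Ω₁ → Ω₂ → Set X)) : Prop :=
  ∀ D ∈ 𝒟, ∀ B : Ω₁ → Ω₂ → Set X,
    (∀ (ω₁ : Ω₁) (ω₂ : Ω₂), (B ω₁ ω₂).Nonempty ∧ B ω₁ ω₂ ⊆ D ω₁ ω₂) → B ∈ 𝒟

/-- `𝒟`-pullback asymptotic compactness of `Φ` (Definition 2.16). -/
def AsymptoticallyCompact (θ₁ : ℝ → Ω₁ → Ω₁) (θ₂ : ℝ → Ω₂ → Ω₂)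
    (Φ : ℝ → Ω₁ → Ω₂ → X → X) (𝒟 : Set (Ω₁ → Ω₂ → Set X)) : Prop :=
  ∀ (ω₁ : Ω₁) (ω₂ : Ω₂), ∀ B ∈ 𝒟, ∀ (t : ℕ → ℝ) (x : ℕ → X),
    Tendsto t atTop atTop →
    (∀ n, x n ∈ B (θ₁ (-t n) ω₁) (θ₂ (-t n) ω₂)) →
    ∃ (φ : ℕ → ℕ) (y : X), StrictMono φ ∧
      Tendsto (fun n => Φ (t (φ n)) (θ₁ (-t (φ n)) ω₁) (θ₂ (-t (φ n)) ω₂) (x (φ n)))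
        atTop (𝓝 y)

/-- The Hausdorff semi-metric `d(C,B) = sup_{x ∈ C} inf_{b ∈ B} d(x,b)`,
valued in `ℝ≥0∞`. -/
noncomputable def hausSemidist (C B : Set X) : ℝ≥0∞ :=
  ⨆ x ∈ C, EMetric.infEdist x B

/-- The family `A` pullback attracts the family `B` under `Φ`. -/
def Attracts (θ₁ : ℝ → Ω₁ → Ω₁) (θ₂ : ℝ → Ω₂ → Ω₂)
    (Φ : ℝ → Ω₁ → Ω₂ → X → X) (B A : Ω₁ → Ω₂ → Set X) : Prop :=
  ∀ (ω₁ : Ω₁) (ω₂ : Ω₂),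
    Tendsto (fun t : ℝ => hausSemidist
        (Φ t (θ₁ (-t) ω₁) (θ₂ (-t) ω₂) '' B (θ₁ (-t) ω₁) (θ₂ (-t) ω₂)) (A ω₁ ω₂))
      atTop (𝓝 0)

/-- A `𝒟`-pullback absorbing set for `Φ` (Definition 2.15). -/
def IsAbsorbingSet (θ₁ : ℝ → Ω₁ → Ω₁) (θ₂ : ℝ → Ω₂ → Ω₂)
    (Φ : ℝ → Ω₁ → Ω₂ → X → X) (𝒟 : Set (Ω₁ → Ω₂ → Set X))
    (K : Ω₁ → Ω₂ → Set X) : Prop :=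
  K ∈ 𝒟 ∧ ∀ (ω₁ : Ω₁) (ω₂ : Ω₂), ∀ B ∈ 𝒟, ∃ T : ℝ, 0 < T ∧ ∀ t : ℝ, T ≤ t →
    Φ t (θ₁ (-t) ω₁) (θ₂ (-t) ω₂) '' B (θ₁ (-t) ω₁) (θ₂ (-t) ω₂) ⊆ K ω₁ ω₂

/-- A closed measurable (w.r.t. the `P`-completion of `ℱ₂`) `𝒟`-pullback
absorbing set for `Φ`. -/
def IsClosedMeasurableAbsorbingSet (θ₁ : ℝ → Ω₁ → Ω₁) (θ₂ : ℝ → Ω₂ → Ω₂)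
    (Φ : ℝ → Ω₁ → Ω₂ → X → X) (P : Measure Ω₂) (𝒟 : Set (Ω₁ → Ω₂ → Set X))
    (K : Ω₁ → Ω₂ → Set X) : Prop :=
  IsAbsorbingSet θ₁ θ₂ Φ 𝒟 K ∧
    (∀ (ω₁ : Ω₁) (ω₂ : Ω₂), IsClosed (K ω₁ ω₂) ∧ (K ω₁ ω₂).Nonempty) ∧
    ∀ (ω₁ : Ω₁) (x : X), NullMeasurable (fun ω₂ => Metric.infDist x (K ω₁ ω₂)) P

/-- A `𝒟`-pullback attractor for `Φ` (Definition 2.17). -/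
structure IsPullbackAttractor (θ₁ : ℝ → Ω₁ → Ω₁) (θ₂ : ℝ → Ω₂ → Ω₂)
    (Φ : ℝ → Ω₁ → Ω₂ → X → X) (P : Measure Ω₂) (𝒟 : Set (Ω₁ → Ω₂ → Set X))
    (A : Ω₁ → Ω₂ → Set X) : Prop where
  mem : A ∈ 𝒟
  compact : ∀ (ω₁ : Ω₁) (ω₂ : Ω₂), IsCompact (A ω₁ ω₂)
  measurable : ∀ (ω₁ : Ω₁) (x : X),
    NullMeasurable (fun ω₂ => Metric.infDist x (A ω₁ ω₂)) P
  invariant : Invariant θ₁ θ₂ Φ A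
  attracts : ∀ B ∈ 𝒟, Attracts θ₁ θ₂ Φ B A

set_option maxHeartbeats 1000000
section Selection
set_option linter.unusedSectionVars false
variable {Ω : Type*} [MeasurableSpace Ω] {Y : Type*} [MetricSpace Y] [CompleteSpace Y]
  [MeasurableSpace Y] [BorelSpace Y]

lemma sel_exists (F : Ω → Set Y) (hFne : ∀ ω, (F ω).Nonempty) {d : ℕ → Y} (hd : DenseRange d)
    (ω : Ω) (p : Y) {ε δ : ℝ} (hε : 0 < ε) (hδ : 0 < δ) :
    ∃ i : ℕ, dist (d i) p < Metric.infDist p (F ω) + ε ∧ Metric.infDist (d i) (F ω) < δ := by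
  have h1 : Metric.infDist p (F ω) < Metric.infDist p (F ω) + ε/2 := by linarith
  obtain ⟨y, hyF, hyd⟩ := (Metric.infDist_lt_iff (hFne ω)).mp h1
  obtain ⟨i, hi⟩ := hd.exists_dist_lt y (lt_min (half_pos hε) hδ)
  refine ⟨i, ?_, ?_⟩
  · calc dist (d i) p ≤ dist (d i) y + dist y p := dist_triangle _ _ _
      _ = dist y (d i) + dist p y := by rw [dist_comm (d i) y, dist_comm y p]
      _ < min (ε/2) δ + (Metric.infDist p (F ω) + ε/2) := by
          exact add_lt_add hi hyd
      _ ≤ Metric.infDist p (F ω) + ε := by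
          have := min_le_left (ε/2) δ; linarith
  · calc Metric.infDist (d i) (F ω) ≤ dist (d i) y := Metric.infDist_le_dist_of_mem hyF
      _ = dist y (d i) := dist_comm _ _
      _ < min (ε/2) δ := hi
      _ ≤ δ := min_le_right _ _


private lemma measurable_nat_comp {Ω : Type*} [MeasurableSpace Ω] {β : Type*}
    [MeasurableSpace β] {g : Ω → ℕ} {u : ℕ → Ω → β} (hg : Measurable g)
    (hu : ∀ i, Measurable (u i)) : Measurable fun ω => u (g ω) ω := by
  have hjoint : Measurable fun q : Ω × ℕ => u q.2 q.1 :=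
    measurable_from_prod_countable_left fun i => hu i
  exact hjoint.comp (measurable_id.prodMk hg)

private lemma measurable_nat_comp' {Ω : Type*} [MeasurableSpace Ω] {β : Type*}
    [MeasurableSpace β] {g : Ω → ℕ} (v : ℕ → β) (hg : Measurable g) :
    Measurable fun ω => v (g ω) :=
  measurable_nat_comp hg (u := fun i _ => v i) fun _ => measurable_const

open Classical in
private noncomputable def selIdx (F : Ω → Set Y) (hFne : ∀ ω, (F ω).Nonempty)
    {d : ℕ → Y} (hd : DenseRange d) (c : ℕ) (ω : Ω) (j : ℕ) : ℕ → ℕ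
  | 0 => j
  | m + 1 => Nat.find (sel_exists F hFne hd ω (d (selIdx F hFne hd c ω j m))
      (pow_pos (by norm_num : (0:ℝ) < 2⁻¹) (c + m))
      (pow_pos (by norm_num : (0:ℝ) < 2⁻¹) (c + m + 1)))

open Classical in
private lemma selIdx_spec (F : Ω → Set Y) (hFne : ∀ ω, (F ω).Nonempty)
    {d : ℕ → Y} (hd : DenseRange d) (c : ℕ) (ω : Ω) (j m : ℕ) :
    dist (d (selIdx F hFne hd c ω j (m+1))) (d (selIdx F hFne hd c ω j m))
      < Metric.infDist (d (selIdx F hFne hd c ω j m)) (F ω) + (2⁻¹:ℝ)^(c+m)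
    ∧ Metric.infDist (d (selIdx F hFne hd c ω j (m+1))) (F ω) < (2⁻¹:ℝ)^(c+m+1) := by
  rw [selIdx]
  exact Nat.find_spec (sel_exists F hFne hd ω (d (selIdx F hFne hd c ω j m))
      (pow_pos (by norm_num : (0:ℝ) < 2⁻¹) (c + m))
      (pow_pos (by norm_num : (0:ℝ) < 2⁻¹) (c + m + 1)))

private lemma selIdx_measurable (F : Ω → Set Y) (hFne : ∀ ω, (F ω).Nonempty)
    {d : ℕ → Y} (hd : DenseRange d)
    (hmeas : ∀ i : ℕ, Measurable fun ω => Metric.infDist (d i) (F ω)) (c j : ℕ) (m : ℕ) :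
    Measurable (fun ω => selIdx F hFne hd c ω j m) := by
  classical
  induction m with
  | zero => simpa [selIdx] using measurable_const
  | succ m ih =>
    have hinf : Measurable fun ω => Metric.infDist (d (selIdx F hFne hd c ω j m)) (F ω) :=
      measurable_nat_comp (u := fun i ω => Metric.infDist (d i) (F ω)) ih hmeas
    have hdist : ∀ i : ℕ, Measurable fun ω => dist (d i) (d (selIdx F hFne hd c ω j m)) :=
      fun i => measurable_nat_comp' (fun n => dist (d i) (d n)) ih
    have : Measurable fun ω => Nat.find (sel_exists F hFne hd ω (d (selIdx F hFne hd c ω j m))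
        (pow_pos (by norm_num : (0:ℝ) < 2⁻¹) (c + m))
        (pow_pos (by norm_num : (0:ℝ) < 2⁻¹) (c + m + 1))) := by
      apply measurable_find
      intro i
      apply MeasurableSet.inter
      · exact measurableSet_lt (hdist i) (hinf.add_const _)
      · exact measurableSet_lt (hmeas i) measurable_const
    simpa [selIdx] using this

private lemma sel_main (F : Ω → Set Y) (hFcl : ∀ ω, IsClosed (F ω))
    (hFne : ∀ ω, (F ω).Nonempty) {d : ℕ → Y} (hd : DenseRange d)
    (hmeas : ∀ i : ℕ, Measurable fun ω => Metric.infDist (d i) (F ω)) (j c : ℕ) :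
    ∃ σ : Ω → Y, Measurable σ ∧ (∀ ω, σ ω ∈ F ω) ∧
      ∀ ω, dist (σ ω) (d j) ≤ 2 * Metric.infDist (d j) (F ω) + 8 * (2⁻¹:ℝ)^c := by
  have : Nonempty Y := ⟨d 0⟩
  set f : Ω → ℕ → Y := fun ω m => d (selIdx F hFne hd c ω j m) with hf
  have hspec : ∀ (ω : Ω) (m : ℕ), dist (f ω (m+1)) (f ω m)
        < Metric.infDist (f ω m) (F ω) + (2⁻¹:ℝ)^(c+m)
      ∧ Metric.infDist (f ω (m+1)) (F ω) < (2⁻¹:ℝ)^(c+m+1) :=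
    fun ω m => selIdx_spec F hFne hd c ω j m
  have hinv : ∀ (ω : Ω) m, Metric.infDist (f ω (m+1)) (F ω) < (2⁻¹:ℝ)^(c+m+1) :=
    fun ω m => (hspec ω m).2
  have hf0 : ∀ ω : Ω, f ω 0 = d j := fun ω => by simp [hf, selIdx]
  set C : Ω → ℝ := fun ω => Metric.infDist (d j) (F ω) + 2*(2⁻¹:ℝ)^c with hC
  have hpow : ∀ m : ℕ, (0:ℝ) < (2⁻¹:ℝ)^m := fun m => by positivity
  have hstep : ∀ (ω : Ω) m, dist (f ω m) (f ω (m+1)) ≤ C ω * (2⁻¹:ℝ)^m := by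
    intro ω m
    rw [dist_comm]
    rcases m with _ | m
    · have h := (hspec ω 0).1
      rw [hf0 ω] at h
      have h2 : (0:ℝ) < (2⁻¹:ℝ)^c := hpow c
      simp only [hC, pow_zero, mul_one]
      calc dist (f ω (0+1)) (f ω 0)
          ≤ Metric.infDist (d j) (F ω) + (2⁻¹:ℝ)^(c+0) := by rw [hf0 ω]; exact h.le
        _ ≤ _ := by rw [add_zero]; linarith
    · have h := (hspec ω (m+1)).1
      have h2 := (hspec ω m).2
      have hd0 : (0:ℝ) ≤ Metric.infDist (d j) (F ω) := Metric.infDist_nonneg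
      calc dist (f ω (m+2)) (f ω (m+1))
          ≤ Metric.infDist (f ω (m+1)) (F ω) + (2⁻¹:ℝ)^(c+(m+1)) := h.le
        _ ≤ (2⁻¹:ℝ)^(c+m+1) + (2⁻¹:ℝ)^(c+(m+1)) := by
            have := h2.le
            exact add_le_add this le_rfl
        _ = 2 * ((2⁻¹:ℝ)^c * (2⁻¹:ℝ)^(m+1)) := by
            rw [show c+m+1 = c+(m+1) by omega, pow_add]; ring
        _ ≤ C ω * (2⁻¹:ℝ)^(m+1) := by
            simp only [hC]
            have := hpow (m+1)
            nlinarith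
  have hcau : ∀ ω : Ω, CauchySeq (f ω) := fun ω =>
    cauchySeq_of_le_geometric 2⁻¹ (C ω) (by norm_num) (hstep ω)
  set σ : Ω → Y := fun ω => limUnder atTop (f ω) with hσ
  have htend : ∀ ω, Tendsto (f ω) atTop (𝓝 (σ ω)) := fun ω => (hcau ω).tendsto_limUnder
  have hbound : ∀ ω, dist (σ ω) (d j) ≤ 2 * Metric.infDist (d j) (F ω) + 8 * (2⁻¹:ℝ)^c := by
    intro ω
    have h := dist_le_of_le_geometric_of_tendsto₀ 2⁻¹ (C ω) (by norm_num) (hstep ω) (htend ω)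
    rw [hf0 ω] at h
    rw [dist_comm]
    calc dist (d j) (σ ω) ≤ C ω / (1 - 2⁻¹) := h
      _ = 2 * Metric.infDist (d j) (F ω) + 4*(2⁻¹:ℝ)^c := by simp only [hC]; ring
      _ ≤ _ := by
          have := hpow c; linarith
  have hmem : ∀ ω, σ ω ∈ F ω := by
    intro ω
    have h1 : Tendsto (fun m => Metric.infDist (f ω (m+1)) (F ω)) atTop
        (𝓝 (Metric.infDist (σ ω) (F ω))) :=
      ((Metric.continuous_infDist_pt (F ω)).tendsto _).comp
        ((htend ω).comp (tendsto_add_atTop_nat 1))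
    have hgeo : Tendsto (fun m : ℕ => (2⁻¹:ℝ)^(c+m+1)) atTop (𝓝 0) := by
      have h3 := (tendsto_pow_atTop_nhds_zero_of_lt_one (by norm_num : (0:ℝ) ≤ 2⁻¹)
        (by norm_num : (2⁻¹:ℝ) < 1)).const_mul ((2⁻¹:ℝ)^(c+1))
      rw [mul_zero] at h3
      refine h3.congr fun m => ?_
      rw [← pow_add]
      congr 1
      omega
    have h2 : Tendsto (fun m => Metric.infDist (f ω (m+1)) (F ω)) atTop (𝓝 0) :=
      squeeze_zero (fun _ => Metric.infDist_nonneg) (fun m => (hinv ω m).le) hgeo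
    have h0 : Metric.infDist (σ ω) (F ω) = 0 := tendsto_nhds_unique h1 h2
    exact ((hFcl ω).mem_iff_infDist_zero (hFne ω)).mpr h0
  refine ⟨σ, ?_, hmem, hbound⟩
  apply measurable_of_tendsto_metrizable
    (f := fun m ω => f ω m) (fun m => ?_) (tendsto_pi_nhds.mpr htend)
  exact measurable_nat_comp' d (selIdx_measurable F hFne hd hmeas c j m)

lemma exists_selection (F : Ω → Set Y) (hFcl : ∀ ω, IsClosed (F ω))
    (hFne : ∀ ω, (F ω).Nonempty) {d : ℕ → Y} (hd : DenseRange d)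
    (hmeas : ∀ i : ℕ, Measurable fun ω => Metric.infDist (d i) (F ω)) :
    ∃ σ : ℕ → Ω → Y, (∀ k, Measurable (σ k)) ∧ (∀ k ω, σ k ω ∈ F ω) ∧
      ∀ (ω : Ω) (y : Y), y ∈ F ω → ∀ ε : ℝ, 0 < ε → ∃ k, dist (σ k ω) y < ε := by
  have main := fun j c => sel_main F hFcl hFne hd hmeas j c
  choose sel hselm hselF hselb using main
  refine ⟨fun n => sel (Nat.unpair n).1 (Nat.unpair n).2,
    fun n => hselm _ _, fun n ω => hselF _ _ ω, ?_⟩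
  intro ω y hy ε hε
  obtain ⟨c, hc⟩ := exists_pow_lt_of_lt_one (show (0:ℝ) < ε/16 by linarith)
    (by norm_num : (2⁻¹:ℝ) < 1)
  obtain ⟨j, hj⟩ := hd.exists_dist_lt y (show (0:ℝ) < ε/16 by linarith)
  refine ⟨Nat.pair j c, ?_⟩
  simp only [Nat.unpair_pair]
  have h1 : Metric.infDist (d j) (F ω) ≤ dist (d j) y := Metric.infDist_le_dist_of_mem hy
  have h2 := hselb j c ω
  calc dist (sel j c ω) y ≤ dist (sel j c ω) (d j) + dist (d j) y := dist_triangle _ _ _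
    _ ≤ 2 * Metric.infDist (d j) (F ω) + 8 * (2⁻¹:ℝ)^c + dist (d j) y := by linarith
    _ < ε := by
        rw [dist_comm (d j) y] at h1 ⊢
        linarith

end Selection
section AuxLemmas

lemma IsGroupAction.comp {α : Type*} {θ : ℝ → α → α} (hθ : IsGroupAction θ) {s t u : ℝ}
    (h : s + t = u) (a : α) : θ t (θ s a) = θ u a := by subst h; exact (hθ.2 s t a).symm

variable {θ₁ : ℝ → Ω₁ → Ω₁} {θ₂ : ℝ → Ω₂ → Ω₂} {Φ : ℝ → Ω₁ → Ω₂ → X → X}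
  {𝒟 : Set (Ω₁ → Ω₂ → Set X)} {K : Ω₁ → Ω₂ → Set X}

lemma mem_omegaLimit_of_tendsto (hθ₁ : IsGroupAction θ₁) (hθ₂ : IsGroupAction θ₂)
    (hΦ : IsCocycle θ₁ θ₂ Φ) (hKabs : IsAbsorbingSet θ₁ θ₂ Φ 𝒟 K)
    {B : Ω₁ → Ω₂ → Set X} (hB : B ∈ 𝒟) (ω₁ : Ω₁) (ω₂ : Ω₂)
    {t : ℕ → ℝ} {x : ℕ → X} (ht : Tendsto t atTop atTop)
    (hx : ∀ n, x n ∈ B (θ₁ (-t n) ω₁) (θ₂ (-t n) ω₂)) {y : X}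
    (hy : Tendsto (fun n => Φ (t n) (θ₁ (-t n) ω₁) (θ₂ (-t n) ω₂) (x n)) atTop (𝓝 y)) :
    y ∈ omegaLimit θ₁ θ₂ Φ K ω₁ ω₂ := by
  rw [omegaLimit, mem_iInter₂]
  intro τ hτ
  rw [mem_Ici] at hτ
  obtain ⟨T, hT0, hT⟩ := hKabs.2 (θ₁ (-τ) ω₁) (θ₂ (-τ) ω₂) B hB
  refine mem_closure_of_tendsto hy ?_
  filter_upwards [ht.eventually_ge_atTop (τ + T)] with n hn
  have hs0 : (0:ℝ) ≤ t n - τ := by linarith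
  have hsT : T ≤ t n - τ := by linarith
  have key : Φ (t n) (θ₁ (-t n) ω₁) (θ₂ (-t n) ω₂) (x n)
      = Φ τ (θ₁ (-τ) ω₁) (θ₂ (-τ) ω₂)
          (Φ (t n - τ) (θ₁ (-t n) ω₁) (θ₂ (-t n) ω₂) (x n)) := by
    have h := hΦ.cocycle τ (t n - τ) hτ hs0 (θ₁ (-t n) ω₁) (θ₂ (-t n) ω₂) (x n)
    rw [show τ + (t n - τ) = t n by ring] at h
    rw [h, hθ₁.comp (by ring : -t n + (t n - τ) = -τ),
      hθ₂.comp (by ring : -t n + (t n - τ) = -τ)]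
  have hmem : Φ (t n - τ) (θ₁ (-t n) ω₁) (θ₂ (-t n) ω₂) (x n)
      ∈ K (θ₁ (-τ) ω₁) (θ₂ (-τ) ω₂) := by
    have h2 := hT (t n - τ) hsT
    rw [hθ₁.comp (by ring : -τ + -(t n - τ) = -t n),
      hθ₂.comp (by ring : -τ + -(t n - τ) = -t n)] at h2
    exact h2 (mem_image_of_mem _ (hx n))
  rw [key]
  exact mem_biUnion (mem_Ici.mpr le_rfl) (mem_image_of_mem _ hmem)

lemma omegaLimit_subset (hKabs : IsAbsorbingSet θ₁ θ₂ Φ 𝒟 K)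
    (hKcl : ∀ ω₁ ω₂, IsClosed (K ω₁ ω₂)) (ω₁ : Ω₁) (ω₂ : Ω₂) :
    omegaLimit θ₁ θ₂ Φ K ω₁ ω₂ ⊆ K ω₁ ω₂ := by
  obtain ⟨T, hT0, hT⟩ := hKabs.2 ω₁ ω₂ K hKabs.1
  intro y hy
  rw [omegaLimit, mem_iInter₂] at hy
  have h1 := hy T (mem_Ici.mpr hT0.le)
  have hsub : (⋃ t ∈ Ici T, Φ t (θ₁ (-t) ω₁) (θ₂ (-t) ω₂)
      '' K (θ₁ (-t) ω₁) (θ₂ (-t) ω₂)) ⊆ K ω₁ ω₂ :=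
    iUnion₂_subset fun t htT => hT t (mem_Ici.mp htT)
  exact (hKcl ω₁ ω₂).closure_subset_iff.mpr hsub h1

lemma omegaLimit_nonempty (hθ₁ : IsGroupAction θ₁) (hθ₂ : IsGroupAction θ₂)
    (hΦ : IsCocycle θ₁ θ₂ Φ) (hKabs : IsAbsorbingSet θ₁ θ₂ Φ 𝒟 K)
    (hKne : ∀ ω₁ ω₂, (K ω₁ ω₂).Nonempty)
    (hac : AsymptoticallyCompact θ₁ θ₂ Φ 𝒟) (ω₁ : Ω₁) (ω₂ : Ω₂) :
    (omegaLimit θ₁ θ₂ Φ K ω₁ ω₂).Nonempty := by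
  choose x hx using fun n : ℕ => hKne (θ₁ (-(n:ℝ)) ω₁) (θ₂ (-(n:ℝ)) ω₂)
  obtain ⟨φ, y, hφ, hy⟩ := hac ω₁ ω₂ K hKabs.1 (fun n => (n:ℝ)) x
    tendsto_natCast_atTop_atTop hx
  exact ⟨y, mem_omegaLimit_of_tendsto hθ₁ hθ₂ hΦ hKabs hKabs.1 ω₁ ω₂
    (tendsto_natCast_atTop_atTop.comp hφ.tendsto_atTop) (fun n => hx (φ n)) hy⟩

lemma omegaLimit_isClosed (ω₁ : Ω₁) (ω₂ : Ω₂) :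
    IsClosed (omegaLimit θ₁ θ₂ Φ K ω₁ ω₂) :=
  isClosed_biInter fun _ _ => isClosed_closure

set_option linter.unusedSectionVars false

lemma omegaLimit_isCompact (hθ₁ : IsGroupAction θ₁) (hθ₂ : IsGroupAction θ₂)
    (hΦ : IsCocycle θ₁ θ₂ Φ) (hKabs : IsAbsorbingSet θ₁ θ₂ Φ 𝒟 K)
    (hac : AsymptoticallyCompact θ₁ θ₂ Φ 𝒟) (ω₁ : Ω₁) (ω₂ : Ω₂) :
    IsCompact (omegaLimit θ₁ θ₂ Φ K ω₁ ω₂) := by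
  apply IsSeqCompact.isCompact
  intro u hu
  have H : ∀ n : ℕ, ∃ (s : ℝ) (k : X), (n:ℝ) ≤ s ∧ k ∈ K (θ₁ (-s) ω₁) (θ₂ (-s) ω₂) ∧
      dist (u n) (Φ s (θ₁ (-s) ω₁) (θ₂ (-s) ω₂) k) < 1 / ((n:ℝ)+1) := by
    intro n
    have hn' := hu n
    rw [omegaLimit, mem_iInter₂] at hn'
    have hn := hn' (n:ℝ) (mem_Ici.mpr (Nat.cast_nonneg n))
    rw [Metric.mem_closure_iff] at hn
    obtain ⟨z, hz, hdz⟩ := hn (1/((n:ℝ)+1)) (by positivity)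
    rw [mem_iUnion₂] at hz
    obtain ⟨s, hs, hz⟩ := hz
    obtain ⟨k, hk, rfl⟩ := hz
    exact ⟨s, k, mem_Ici.mp hs, hk, hdz⟩
  choose s k hs hk hd using H
  have hts : Tendsto s atTop atTop := tendsto_atTop_mono hs tendsto_natCast_atTop_atTop
  obtain ⟨φ, y, hφ, hy⟩ := hac ω₁ ω₂ K hKabs.1 s k hts hk
  refine ⟨y, ?_, φ, hφ, ?_⟩
  · exact mem_omegaLimit_of_tendsto hθ₁ hθ₂ hΦ hKabs hKabs.1 ω₁ ω₂
      (hts.comp hφ.tendsto_atTop) (fun n => hk (φ n)) hy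
  · have hd0 : Tendsto (fun n => dist (u (φ n))
        (Φ (s (φ n)) (θ₁ (-s (φ n)) ω₁) (θ₂ (-s (φ n)) ω₂) (k (φ n)))) atTop (𝓝 0) := by
      apply squeeze_zero (fun n => dist_nonneg)
        (fun n => le_trans (hd (φ n)).le ?_) tendsto_one_div_add_atTop_nhds_zero_nat
      · gcongr
        exact_mod_cast hφ.le_apply
    have := hy.congr_dist (by simpa [dist_comm] using hd0)
    exact this

lemma omegaLimit_attracts (hθ₁ : IsGroupAction θ₁) (hθ₂ : IsGroupAction θ₂)
    (hΦ : IsCocycle θ₁ θ₂ Φ) (hKabs : IsAbsorbingSet θ₁ θ₂ Φ 𝒟 K)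
    (hac : AsymptoticallyCompact θ₁ θ₂ Φ 𝒟) {B : Ω₁ → Ω₂ → Set X} (hB : B ∈ 𝒟) :
    Attracts θ₁ θ₂ Φ B (fun ω₁ ω₂ => omegaLimit θ₁ θ₂ Φ K ω₁ ω₂) := by
  intro ω₁ ω₂
  rw [ENNReal.tendsto_nhds_zero]
  intro ε hε
  by_contra hcon
  rw [not_eventually] at hcon
  have H : ∀ n : ℕ, ∃ t' : ℝ, (n:ℝ) ≤ t' ∧
      ¬ hausSemidist (Φ t' (θ₁ (-t') ω₁) (θ₂ (-t') ω₂) '' B (θ₁ (-t') ω₁) (θ₂ (-t') ω₂))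
        (omegaLimit θ₁ θ₂ Φ K ω₁ ω₂) ≤ ε := fun n => frequently_atTop.mp hcon (n:ℝ)
  choose t htn hts using H
  have Hx : ∀ n, ∃ xx : X, xx ∈ B (θ₁ (-t n) ω₁) (θ₂ (-t n) ω₂) ∧
      ε < EMetric.infEdist (Φ (t n) (θ₁ (-t n) ω₁) (θ₂ (-t n) ω₂) xx)
        (omegaLimit θ₁ θ₂ Φ K ω₁ ω₂) := by
    intro n
    have h1 := lt_of_not_ge (hts n)
    rw [hausSemidist, lt_iSup_iff] at h1
    obtain ⟨z, h1⟩ := h1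
    rw [lt_iSup_iff] at h1
    obtain ⟨hz, h1⟩ := h1
    obtain ⟨xx, hxx, rfl⟩ := hz
    exact ⟨xx, hxx, h1⟩
  choose x hxB hxd using Hx
  obtain ⟨φ, y, hφ, hy⟩ := hac ω₁ ω₂ B hB t x
    (tendsto_atTop_mono htn tendsto_natCast_atTop_atTop) hxB
  have hyA : y ∈ omegaLimit θ₁ θ₂ Φ K ω₁ ω₂ :=
    mem_omegaLimit_of_tendsto hθ₁ hθ₂ hΦ hKabs hB ω₁ ω₂
      ((tendsto_atTop_mono htn tendsto_natCast_atTop_atTop).comp hφ.tendsto_atTop)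
      (fun n => hxB (φ n)) hy
  have h0 : EMetric.infEdist y (omegaLimit θ₁ θ₂ Φ K ω₁ ω₂) = 0 :=
    EMetric.infEdist_zero_of_mem hyA
  have hcont : Tendsto (fun n => EMetric.infEdist
      (Φ (t (φ n)) (θ₁ (-t (φ n)) ω₁) (θ₂ (-t (φ n)) ω₂) (x (φ n)))
      (omegaLimit θ₁ θ₂ Φ K ω₁ ω₂)) atTop (𝓝 0) := by
    rw [← h0]
    exact ((EMetric.continuous_infEdist).tendsto y).comp hy
  have : ε ≤ 0 := ge_of_tendsto hcont (Eventually.of_forall fun n => (hxd (φ n)).le)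
  exact absurd (le_antisymm this zero_le) (ne_of_gt hε)
lemma omegaLimit_approx {ω₁ : Ω₁} {ω₂ : Ω₂} {y : X} (hy : y ∈ omegaLimit θ₁ θ₂ Φ K ω₁ ω₂)
    (r : ℝ) (hr : 0 ≤ r) {ε : ℝ} (hε : 0 < ε) :
    ∃ (s : ℝ) (kk : X), r ≤ s ∧ kk ∈ K (θ₁ (-s) ω₁) (θ₂ (-s) ω₂) ∧
      dist y (Φ s (θ₁ (-s) ω₁) (θ₂ (-s) ω₂) kk) < ε := by
  rw [omegaLimit, mem_iInter₂] at hy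
  have hn := hy r (mem_Ici.mpr hr)
  rw [Metric.mem_closure_iff] at hn
  obtain ⟨z, hz, hdz⟩ := hn ε hε
  rw [mem_iUnion₂] at hz
  obtain ⟨s, hs, hz⟩ := hz
  obtain ⟨kk, hkk, rfl⟩ := hz
  exact ⟨s, kk, mem_Ici.mp hs, hkk, hdz⟩

lemma omegaLimit_invariant (hθ₁ : IsGroupAction θ₁) (hθ₂ : IsGroupAction θ₂)
    (hΦ : IsCocycle θ₁ θ₂ Φ) (hKabs : IsAbsorbingSet θ₁ θ₂ Φ 𝒟 K)
    (hac : AsymptoticallyCompact θ₁ θ₂ Φ 𝒟) :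
    Invariant θ₁ θ₂ Φ (fun ω₁ ω₂ => omegaLimit θ₁ θ₂ Φ K ω₁ ω₂) := by
  intro t ht ω₁ ω₂
  apply Set.Subset.antisymm
  · rintro _ ⟨y, hy, rfl⟩
    have H : ∀ n : ℕ, ∃ (s : ℝ) (kk : X), (n:ℝ) ≤ s ∧
        kk ∈ K (θ₁ (-s) ω₁) (θ₂ (-s) ω₂) ∧
        dist y (Φ s (θ₁ (-s) ω₁) (θ₂ (-s) ω₂) kk) < 1/((n:ℝ)+1) :=
      fun n => omegaLimit_approx hy (n:ℝ) (Nat.cast_nonneg n) (by positivity)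
    choose s kk hsn hkk hdd using H
    have hs0 : ∀ n : ℕ, (0:ℝ) ≤ s n := fun n => le_trans (Nat.cast_nonneg n) (hsn n)
    have hzy : Tendsto (fun n => Φ (s n) (θ₁ (-s n) ω₁) (θ₂ (-s n) ω₂) (kk n))
        atTop (𝓝 y) := by
      apply (tendsto_const_nhds (x := y)).congr_dist
      apply squeeze_zero (fun n => dist_nonneg) (fun n => (hdd n).le)
        tendsto_one_div_add_atTop_nhds_zero_nat
    have h2 : Tendsto (fun n => Φ t ω₁ ω₂ (Φ (s n) (θ₁ (-s n) ω₁) (θ₂ (-s n) ω₂) (kk n)))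
        atTop (𝓝 (Φ t ω₁ ω₂ y)) := ((hΦ.continuous t ht ω₁ ω₂).tendsto y).comp hzy
    have key : ∀ n, Φ t ω₁ ω₂ (Φ (s n) (θ₁ (-s n) ω₁) (θ₂ (-s n) ω₂) (kk n))
        = Φ (t + s n) (θ₁ (-(t + s n)) (θ₁ t ω₁)) (θ₂ (-(t + s n)) (θ₂ t ω₂)) (kk n) := by
      intro n
      have h := hΦ.cocycle t (s n) ht (hs0 n) (θ₁ (-s n) ω₁) (θ₂ (-s n) ω₂) (kk n)
      rw [hθ₁.comp (by ring : -s n + s n = 0), hθ₂.comp (by ring : -s n + s n = 0),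
        hθ₁.1, hθ₂.1] at h
      rw [hθ₁.comp (by ring : t + -(t + s n) = -s n),
        hθ₂.comp (by ring : t + -(t + s n) = -s n)]
      exact h.symm
    refine mem_omegaLimit_of_tendsto hθ₁ hθ₂ hΦ hKabs hKabs.1 (θ₁ t ω₁) (θ₂ t ω₂)
      (t := fun n => t + s n) (x := kk) ?_ ?_ (h2.congr key)
    · exact tendsto_atTop_add_const_left atTop t
        (tendsto_atTop_mono hsn tendsto_natCast_atTop_atTop)
    · intro n
      rw [hθ₁.comp (by ring : t + -(t + s n) = -s n),
        hθ₂.comp (by ring : t + -(t + s n) = -s n)]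
      exact hkk n
  · intro z hz
    have H : ∀ n : ℕ, ∃ (s : ℝ) (kk : X), t + (n:ℝ) ≤ s ∧
        kk ∈ K (θ₁ (-s) (θ₁ t ω₁)) (θ₂ (-s) (θ₂ t ω₂)) ∧
        dist z (Φ s (θ₁ (-s) (θ₁ t ω₁)) (θ₂ (-s) (θ₂ t ω₂)) kk) < 1/((n:ℝ)+1) :=
      fun n => omegaLimit_approx hz (t + (n:ℝ))
        (by positivity) (by positivity)
    choose s kk hsn hkk hdd using H
    set r : ℕ → ℝ := fun n => s n - t with hr
    have hrn : ∀ n : ℕ, (n:ℝ) ≤ r n := fun n => by simp only [hr]; linarith [hsn n]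
    have hr0 : ∀ n : ℕ, (0:ℝ) ≤ r n := fun n => le_trans (Nat.cast_nonneg n) (hrn n)
    have hbase₁ : ∀ n, θ₁ (-s n) (θ₁ t ω₁) = θ₁ (-r n) ω₁ := fun n =>
      hθ₁.comp (by simp only [hr]; ring) ω₁
    have hbase₂ : ∀ n, θ₂ (-s n) (θ₂ t ω₂) = θ₂ (-r n) ω₂ := fun n =>
      hθ₂.comp (by simp only [hr]; ring) ω₂
    set w : ℕ → X := fun n => Φ (r n) (θ₁ (-r n) ω₁) (θ₂ (-r n) ω₂) (kk n) with hw
    have key : ∀ n, Φ (s n) (θ₁ (-s n) (θ₁ t ω₁)) (θ₂ (-s n) (θ₂ t ω₂)) (kk n)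
        = Φ t ω₁ ω₂ (w n) := by
      intro n
      have h := hΦ.cocycle t (r n) ht (hr0 n) (θ₁ (-r n) ω₁) (θ₂ (-r n) ω₂) (kk n)
      rw [hθ₁.comp (by ring : -r n + r n = 0), hθ₂.comp (by ring : -r n + r n = 0),
        hθ₁.1, hθ₂.1] at h
      rw [hbase₁ n, hbase₂ n, show s n = t + r n by simp only [hr]; ring, h]
    have hkk' : ∀ n, kk n ∈ K (θ₁ (-r n) ω₁) (θ₂ (-r n) ω₂) := by
      intro n; rw [← hbase₁ n, ← hbase₂ n]; exact hkk n
    obtain ⟨φ, y, hφ, hy⟩ := hac ω₁ ω₂ K hKabs.1 r kk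
      (tendsto_atTop_mono hrn tendsto_natCast_atTop_atTop) hkk'
    have hyA : y ∈ omegaLimit θ₁ θ₂ Φ K ω₁ ω₂ :=
      mem_omegaLimit_of_tendsto hθ₁ hθ₂ hΦ hKabs hKabs.1 ω₁ ω₂
        ((tendsto_atTop_mono hrn tendsto_natCast_atTop_atTop).comp hφ.tendsto_atTop)
        (fun n => hkk' (φ n)) hy
    have h3 : Tendsto (fun n => Φ t ω₁ ω₂ (w (φ n))) atTop (𝓝 (Φ t ω₁ ω₂ y)) :=
      ((hΦ.continuous t ht ω₁ ω₂).tendsto y).comp hy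
    have h4 : Tendsto (fun n => Φ t ω₁ ω₂ (w (φ n))) atTop (𝓝 z) := by
      apply (tendsto_const_nhds (x := z)).congr_dist
      apply squeeze_zero (fun n => dist_nonneg) (fun n => ?_)
        tendsto_one_div_add_atTop_nhds_zero_nat
      calc dist z (Φ t ω₁ ω₂ (w (φ n))) = dist z (Φ (s (φ n)) (θ₁ (-s (φ n)) (θ₁ t ω₁))
            (θ₂ (-s (φ n)) (θ₂ t ω₂)) (kk (φ n))) := by rw [key (φ n)]
        _ ≤ 1/((φ n : ℝ)+1) := (hdd (φ n)).le
        _ ≤ 1/((n:ℝ)+1) := by gcongr; exact_mod_cast hφ.le_apply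
    exact ⟨y, hyA, tendsto_nhds_unique h3 h4⟩
lemma infEdist_le_infEdist_add_hausSemidist (x : X) (s t : Set X) :
    EMetric.infEdist x t ≤ EMetric.infEdist x s + hausSemidist s t := by
  refine ENNReal.le_of_forall_pos_le_add fun ε εpos h => ?_
  have ε0 : (ε / 2 : ℝ≥0∞) ≠ 0 := by simpa [pos_iff_ne_zero] using εpos
  have h1 : EMetric.infEdist x s < EMetric.infEdist x s + ε / 2 :=
    ENNReal.lt_add_right (ENNReal.add_lt_top.1 h).1.ne ε0
  obtain ⟨y, ys, dxy⟩ := EMetric.infEdist_lt_iff.mp h1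
  have h2 : EMetric.infEdist y t ≤ hausSemidist s t :=
    le_iSup₂ (f := fun z (_ : z ∈ s) => EMetric.infEdist z t) y ys
  have h3 : EMetric.infEdist y t < hausSemidist s t + ε/2 :=
    lt_of_le_of_lt h2 (ENNReal.lt_add_right (ENNReal.add_lt_top.1 h).2.ne ε0)
  obtain ⟨z, zt, dyz⟩ := EMetric.infEdist_lt_iff.mp h3
  calc EMetric.infEdist x t ≤ edist x z := EMetric.infEdist_le_edist_of_mem zt
    _ ≤ edist x y + edist y z := edist_triangle _ _ _
    _ ≤ (EMetric.infEdist x s + ε / 2) + (hausSemidist s t + ε / 2) :=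
        add_le_add dxy.le dyz.le
    _ = EMetric.infEdist x s + hausSemidist s t + ε := by
        conv_rhs => rw [← ENNReal.add_halves (ε:ℝ≥0∞)]
        ring

lemma infEdist_image_eq {Y Z : Type*} [MetricSpace Y] [MetricSpace Z]
    (S : Set Y) (T : ℕ → Y) (hT : ∀ k, T k ∈ S)
    (hdense : ∀ y ∈ S, ∀ ε : ℝ, 0 < ε → ∃ k, dist (T k) y < ε)
    {φ : Y → Z} (hφ : Continuous φ) (x : Z) :
    EMetric.infEdist x (φ '' S) = ⨅ k, edist x (φ (T k)) := by
  apply le_antisymm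
  · exact le_iInf fun k => EMetric.infEdist_le_edist_of_mem (mem_image_of_mem _ (hT k))
  · rw [EMetric.infEdist, EMetric.le_infEdist]
    rintro _ ⟨y, hy, rfl⟩
    apply ENNReal.le_of_forall_pos_le_add
    intro ε hε _
    obtain ⟨δ, hδ, hcont⟩ := Metric.continuous_iff.mp hφ y (ε:ℝ) (by exact_mod_cast hε)
    obtain ⟨k, hk⟩ := hdense y hy δ hδ
    calc (⨅ k, edist x (φ (T k))) ≤ edist x (φ (T k)) := iInf_le _ _
      _ ≤ edist x (φ y) + edist (φ y) (φ (T k)) := edist_triangle _ _ _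
      _ ≤ edist x (φ y) + ε := by
          refine add_le_add le_rfl ?_
          rw [edist_comm, edist_dist]
          calc ENNReal.ofReal (dist (φ (T k)) (φ y)) ≤ ENNReal.ofReal (ε:ℝ) :=
                ENNReal.ofReal_le_ofReal (hcont (T k) hk).le
            _ = (ε : ℝ≥0∞) := ENNReal.ofReal_coe_nnreal

lemma pullback_infEdist_aemeasurable
    [CompleteSpace X] [SecondCountableTopology X] [BorelSpace X]
    (P : Measure Ω₂) [IsProbabilityMeasure P]
    (hΦ : IsCocycle θ₁ θ₂ Φ)
    (hKcl : ∀ ω₁ ω₂, IsClosed (K ω₁ ω₂)) (hKne : ∀ ω₁ ω₂, (K ω₁ ω₂).Nonempty)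
    (hKmeas : ∀ (ω₁ : Ω₁) (x : X), NullMeasurable (fun ω₂ => Metric.infDist x (K ω₁ ω₂)) P)
    (ω₁' : Ω₁) (x : X) {n : ℝ} (hn : 0 ≤ n) :
    AEMeasurable (fun ω₂ => EMetric.infEdist x (Φ n ω₁' ω₂ '' K ω₁' ω₂)) P := by
  classical
  have hΩ₂ : Nonempty Ω₂ := by
    by_contra h
    rw [not_nonempty_iff] at h
    have h1 : P univ = 1 := measure_univ
    rw [Set.univ_eq_empty_iff.mpr h, measure_empty] at h1
    exact zero_ne_one h1
  obtain ⟨ω₀⟩ := hΩ₂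
  have hX : Nonempty X := ⟨(hKne ω₁' ω₀).some⟩
  obtain ⟨d, hd⟩ := TopologicalSpace.exists_dense_seq X
  have hum : ∀ j : ℕ, AEMeasurable (fun ω => Metric.infDist (d j) (K ω₁' ω)) P :=
    fun j => (hKmeas ω₁' (d j)).aemeasurable
  have hbad : ∀ j : ℕ, ∃ N : Set Ω₂, MeasurableSet N ∧ P N = 0 ∧
      ∀ ω ∉ N, Metric.infDist (d j) (K ω₁' ω) = (hum j).mk _ ω := by
    intro j
    obtain ⟨N, hsub, hNm, hN0⟩ := exists_measurable_superset_of_null (ae_iff.mp (hum j).ae_eq_mk)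
    exact ⟨N, hNm, hN0, fun ω hω => by_contra fun hne => hω (hsub hne)⟩
  choose Nb hNbm hNb0 hNbe using hbad
  set N : Set Ω₂ := ⋃ j, Nb j with hNdef
  have hNm : MeasurableSet N := MeasurableSet.iUnion hNbm
  have hN0 : P N = 0 := measure_iUnion_null hNb0
  set K' : Ω₂ → Set X := fun ω => if ω ∈ N then K ω₁' ω₀ else K ω₁' ω with hK'def
  have hK'cl : ∀ ω, IsClosed (K' ω) := fun ω => by
    by_cases h : ω ∈ N <;> simp [hK'def, h, hKcl]
  have hK'ne : ∀ ω, (K' ω).Nonempty := fun ω => by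
    by_cases h : ω ∈ N <;> simp [hK'def, h, hKne]
  have hK'meas : ∀ j : ℕ, Measurable fun ω => Metric.infDist (d j) (K' ω) := by
    intro j
    have heq : (fun ω => Metric.infDist (d j) (K' ω))
        = fun ω => if ω ∈ N then Metric.infDist (d j) (K ω₁' ω₀) else (hum j).mk _ ω := by
      funext ω
      by_cases h : ω ∈ N
      · simp [hK'def, h]
      · have h2 : ω ∉ Nb j := fun hc => h (mem_iUnion.mpr ⟨j, hc⟩)
        simp [hK'def, h, hNbe j ω h2]
    rw [heq]
    exact Measurable.ite hNm measurable_const (hum j).measurable_mk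
  obtain ⟨σ, hσm, hσF, hσd⟩ := exists_selection K' hK'cl hK'ne hd hK'meas
  have hΦm : ∀ k : ℕ, Measurable fun ω => Φ n ω₁' ω (σ k ω) := by
    intro k
    have h1 := hΦ.measurable ω₁'
    exact h1.comp ((measurable_const (a := (⟨n, hn⟩ : {t : ℝ // 0 ≤ t}))).prodMk
      (measurable_id.prodMk (hσm k)))
  have hG'm : Measurable fun ω => ⨅ k, edist x (Φ n ω₁' ω (σ k ω)) :=
    Measurable.iInf fun k => measurable_const.edist (hΦm k)
  refine ⟨fun ω => ⨅ k, edist x (Φ n ω₁' ω (σ k ω)), hG'm, ?_⟩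
  have hae : ∀ᵐ ω ∂P, ω ∉ N := by
    rw [ae_iff]
    simpa using hN0
  filter_upwards [hae] with ω hω
  have hKeq : K ω₁' ω = K' ω := by simp [hK'def, hω]
  rw [hKeq]
  exact infEdist_image_eq (K' ω) (fun k => σ k ω) (fun k => hσF k ω)
    (fun y hy ε hε => hσd ω y hy ε hε) (hΦ.continuous n hn ω₁' ω) x

lemma omegaLimit_nullMeasurable
    [CompleteSpace X] [SecondCountableTopology X] [BorelSpace X]
    (P : Measure Ω₂) [IsProbabilityMeasure P]
    (hθ₁ : IsGroupAction θ₁) (hθ₂ : IsGroupAction θ₂)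
    (hθ₂pres : ∀ t : ℝ, MeasurePreserving (θ₂ t) P P)
    (hΦ : IsCocycle θ₁ θ₂ Φ) (hKabs : IsAbsorbingSet θ₁ θ₂ Φ 𝒟 K)
    (hKcl : ∀ ω₁ ω₂, IsClosed (K ω₁ ω₂)) (hKne : ∀ ω₁ ω₂, (K ω₁ ω₂).Nonempty)
    (hKmeas : ∀ (ω₁ : Ω₁) (x : X), NullMeasurable (fun ω₂ => Metric.infDist x (K ω₁ ω₂)) P)
    (hac : AsymptoticallyCompact θ₁ θ₂ Φ 𝒟)
    (ω₁ : Ω₁) (x : X) :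
    NullMeasurable (fun ω₂ => Metric.infDist x (omegaLimit θ₁ θ₂ Φ K ω₁ ω₂)) P := by
  set F : ℕ → Ω₂ → ℝ≥0∞ := fun n ω₂ => EMetric.infEdist x
    (Φ (n:ℝ) (θ₁ (-(n:ℝ)) ω₁) (θ₂ (-(n:ℝ)) ω₂) '' K (θ₁ (-(n:ℝ)) ω₁) (θ₂ (-(n:ℝ)) ω₂)) with hF
  have hFm : ∀ n : ℕ, AEMeasurable (F n) P := by
    intro n
    have h1 := pullback_infEdist_aemeasurable P hΦ hKcl hKne hKmeas (θ₁ (-(n:ℝ)) ω₁) x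
      (Nat.cast_nonneg n : (0:ℝ) ≤ (n:ℝ))
    exact h1.comp_quasiMeasurePreserving (hθ₂pres (-(n:ℝ))).quasiMeasurePreserving
  have hconv : ∀ ω₂, Tendsto (fun nn => (F nn ω₂).toReal) atTop
      (𝓝 (Metric.infDist x (omegaLimit θ₁ θ₂ Φ K ω₁ ω₂))) := by
    intro ω₂
    have hAne : (omegaLimit θ₁ θ₂ Φ K ω₁ ω₂).Nonempty :=
      omegaLimit_nonempty hθ₁ hθ₂ hΦ hKabs hKne hac ω₁ ω₂
    have hfin : EMetric.infEdist x (omegaLimit θ₁ θ₂ Φ K ω₁ ω₂) ≠ ⊤ :=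
      Metric.infEdist_ne_top hAne
    have hsub : ∀ n : ℕ, omegaLimit θ₁ θ₂ Φ K ω₁ ω₂ ⊆ Φ (n:ℝ) (θ₁ (-(n:ℝ)) ω₁)
        (θ₂ (-(n:ℝ)) ω₂) '' K (θ₁ (-(n:ℝ)) ω₁) (θ₂ (-(n:ℝ)) ω₂) := by
      intro n
      have hinv := omegaLimit_invariant hθ₁ hθ₂ hΦ hKabs hac (n:ℝ) (Nat.cast_nonneg n)
        (θ₁ (-(n:ℝ)) ω₁) (θ₂ (-(n:ℝ)) ω₂)
      rw [hθ₁.comp (by ring : -(n:ℝ) + (n:ℝ) = 0), hθ₂.comp (by ring : -(n:ℝ) + (n:ℝ) = 0),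
        hθ₁.1, hθ₂.1] at hinv
      calc omegaLimit θ₁ θ₂ Φ K ω₁ ω₂
          = Φ (n:ℝ) (θ₁ (-(n:ℝ)) ω₁) (θ₂ (-(n:ℝ)) ω₂)
            '' omegaLimit θ₁ θ₂ Φ K (θ₁ (-(n:ℝ)) ω₁) (θ₂ (-(n:ℝ)) ω₂) := hinv.symm
        _ ⊆ _ := image_mono (omegaLimit_subset hKabs hKcl _ _)
    set H : ℕ → ℝ≥0∞ := fun nn => hausSemidist
      (Φ (nn:ℝ) (θ₁ (-(nn:ℝ)) ω₁) (θ₂ (-(nn:ℝ)) ω₂)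
        '' K (θ₁ (-(nn:ℝ)) ω₁) (θ₂ (-(nn:ℝ)) ω₂)) (omegaLimit θ₁ θ₂ Φ K ω₁ ω₂) with hHdef
    have hH : Tendsto H atTop (𝓝 0) :=
      (omegaLimit_attracts hθ₁ hθ₂ hΦ hKabs hac hKabs.1 ω₁ ω₂).comp
        tendsto_natCast_atTop_atTop
    have hle1 : ∀ nn : ℕ, F nn ω₂ ≤ EMetric.infEdist x (omegaLimit θ₁ θ₂ Φ K ω₁ ω₂) :=
      fun nn => EMetric.infEdist_anti (hsub nn)
    have hle2 : ∀ nn : ℕ, EMetric.infEdist x (omegaLimit θ₁ θ₂ Φ K ω₁ ω₂)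
        ≤ F nn ω₂ + H nn := fun nn => infEdist_le_infEdist_add_hausSemidist x _ _
    have hsq : Tendsto (fun nn => F nn ω₂) atTop
        (𝓝 (EMetric.infEdist x (omegaLimit θ₁ θ₂ Φ K ω₁ ω₂))) := by
      apply tendsto_of_tendsto_of_tendsto_of_le_of_le
        (g := fun nn => EMetric.infEdist x (omegaLimit θ₁ θ₂ Φ K ω₁ ω₂) - H nn)
        (h := fun _ => EMetric.infEdist x (omegaLimit θ₁ θ₂ Φ K ω₁ ω₂))
      · have h5 := ENNReal.Tendsto.sub (tendsto_const_nhds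
          (x := EMetric.infEdist x (omegaLimit θ₁ θ₂ Φ K ω₁ ω₂))) hH (Or.inl hfin)
        rw [tsub_zero] at h5
        exact h5
      · exact tendsto_const_nhds
      · exact fun nn => tsub_le_iff_right.mpr (hle2 nn)
      · exact hle1
    exact (ENNReal.tendsto_toReal hfin).comp hsq
  have h6 : AEMeasurable (fun ω₂ => Metric.infDist x (omegaLimit θ₁ θ₂ Φ K ω₁ ω₂)) P :=
    aemeasurable_of_tendsto_metrizable_ae'
      (fun n => ENNReal.measurable_toReal.comp_aemeasurable (hFm n))
      (Eventually.of_forall hconv)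
  exact h6.nullMeasurable

end AuxLemmas

theorem exists_unique_attractor_of_absorbing
    {Ω₁ Ω₂ X : Type*} [Nonempty Ω₁]
    [MetricSpace X] [CompleteSpace X] [SecondCountableTopology X]
    [MeasurableSpace X] [BorelSpace X]
    [MeasurableSpace Ω₂] (P : Measure Ω₂) [IsProbabilityMeasure P]
    (θ₁ : ℝ → Ω₁ → Ω₁) (θ₂ : ℝ → Ω₂ → Ω₂)
    (hθ₁ : IsGroupAction θ₁) (hθ₂ : IsGroupAction θ₂)
    (hθ₂meas : Measurable fun p : ℝ × Ω₂ => θ₂ p.1 p.2)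
    (hθ₂pres : ∀ t : ℝ, MeasurePreserving (θ₂ t) P P)
    (Φ : ℝ → Ω₁ → Ω₂ → X → X)
    (hΦ : IsCocycle θ₁ θ₂ Φ)
    (𝒟 : Set (Ω₁ → Ω₂ → Set X))
    (h𝒟ne : FamiliesOfNonemptySets 𝒟)
    (h𝒟ic : InclusionClosed 𝒟)
    (K : Ω₁ → Ω₂ → Set X)
    (hK : IsClosedMeasurableAbsorbingSet θ₁ θ₂ Φ P 𝒟 K)
    (hac : AsymptoticallyCompact θ₁ θ₂ Φ 𝒟) :
    IsPullbackAttractor θ₁ θ₂ Φ P 𝒟 (fun ω₁ ω₂ => omegaLimit θ₁ θ₂ Φ K ω₁ ω₂) ∧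
      ∀ A : Ω₁ → Ω₂ → Set X, IsPullbackAttractor θ₁ θ₂ Φ P 𝒟 A →
        A = fun ω₁ ω₂ => omegaLimit θ₁ θ₂ Φ K ω₁ ω₂ := by
  obtain ⟨hKabs, hKprop, hKmeas⟩ := hK
  have hKcl : ∀ ω₁ ω₂, IsClosed (K ω₁ ω₂) := fun a b => (hKprop a b).1
  have hKne : ∀ ω₁ ω₂, (K ω₁ ω₂).Nonempty := fun a b => (hKprop a b).2
  have hAmem : (fun ω₁ ω₂ => omegaLimit θ₁ θ₂ Φ K ω₁ ω₂) ∈ 𝒟 :=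
    h𝒟ic K hKabs.1 _ fun a b =>
      ⟨omegaLimit_nonempty hθ₁ hθ₂ hΦ hKabs hKne hac a b, omegaLimit_subset hKabs hKcl a b⟩
  have hAinv := omegaLimit_invariant hθ₁ hθ₂ hΦ hKabs hac
  have hattr : IsPullbackAttractor θ₁ θ₂ Φ P 𝒟 (fun ω₁ ω₂ => omegaLimit θ₁ θ₂ Φ K ω₁ ω₂) :=
    { mem := hAmem
      compact := fun a b => omegaLimit_isCompact hθ₁ hθ₂ hΦ hKabs hac a b
      measurable := fun a x =>
        omegaLimit_nullMeasurable P hθ₁ hθ₂ hθ₂pres hΦ hKabs hKcl hKne hKmeas hac a x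
      invariant := hAinv
      attracts := fun B hB => omegaLimit_attracts hθ₁ hθ₂ hΦ hKabs hac hB }
  refine ⟨hattr, ?_⟩
  intro A' hA'
  funext a b
  apply Set.Subset.antisymm
  · intro y hy
    have H : ∀ n : ℕ, ∃ xx : X, xx ∈ A' (θ₁ (-(n:ℝ)) a) (θ₂ (-(n:ℝ)) b) ∧
        Φ (n:ℝ) (θ₁ (-(n:ℝ)) a) (θ₂ (-(n:ℝ)) b) xx = y := by
      intro n
      have hinv := hA'.invariant (n:ℝ) (Nat.cast_nonneg n) (θ₁ (-(n:ℝ)) a) (θ₂ (-(n:ℝ)) b)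
      rw [hθ₁.comp (by ring : -(n:ℝ) + (n:ℝ) = 0), hθ₂.comp (by ring : -(n:ℝ) + (n:ℝ) = 0),
        hθ₁.1, hθ₂.1] at hinv
      have hmem : y ∈ Φ (n:ℝ) (θ₁ (-(n:ℝ)) a) (θ₂ (-(n:ℝ)) b)
          '' A' (θ₁ (-(n:ℝ)) a) (θ₂ (-(n:ℝ)) b) := by rw [hinv]; exact hy
      obtain ⟨xx, hxx, hxy⟩ := hmem
      exact ⟨xx, hxx, hxy⟩
    choose xx hxx hxy using H
    refine mem_omegaLimit_of_tendsto hθ₁ hθ₂ hΦ hKabs hA'.mem a b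
      (t := fun n => (n:ℝ)) (x := xx) tendsto_natCast_atTop_atTop hxx ?_
    have heq : (fun n : ℕ => Φ ((n:ℝ)) (θ₁ (-(n:ℝ)) a) (θ₂ (-(n:ℝ)) b) (xx n))
        = fun _ => y := funext fun n => hxy n
    rw [heq]
    exact tendsto_const_nhds
  · intro y hy
    have hattr2 := hA'.attracts _ hAmem a b
    have heq : ∀ᶠ t : ℝ in atTop, hausSemidist
        (Φ t (θ₁ (-t) a) (θ₂ (-t) b)
          '' omegaLimit θ₁ θ₂ Φ K (θ₁ (-t) a) (θ₂ (-t) b)) (A' a b)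
        = hausSemidist (omegaLimit θ₁ θ₂ Φ K a b) (A' a b) := by
      filter_upwards [eventually_ge_atTop (0:ℝ)] with t ht
      have hinv := hAinv t ht (θ₁ (-t) a) (θ₂ (-t) b)
      rw [hθ₁.comp (by ring : -t + t = 0), hθ₂.comp (by ring : -t + t = 0),
        hθ₁.1, hθ₂.1] at hinv
      rw [hinv]
    have hconst : Tendsto (fun _ : ℝ => hausSemidist (omegaLimit θ₁ θ₂ Φ K a b) (A' a b))
        atTop (𝓝 0) := hattr2.congr' heq
    have h0 : hausSemidist (omegaLimit θ₁ θ₂ Φ K a b) (A' a b) = 0 :=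
      tendsto_nhds_unique tendsto_const_nhds hconst
    have h1 : EMetric.infEdist y (A' a b) = 0 := by
      rw [hausSemidist] at h0
      exact le_antisymm (le_trans (le_iSup₂
        (f := fun z (_ : z ∈ omegaLimit θ₁ θ₂ Φ K a b) => EMetric.infEdist z (A' a b)) y hy)
        h0.le) zero_le
    have h2 : y ∈ closure (A' a b) := EMetric.mem_closure_iff_infEdist_zero.mpr h1
    rwa [(hA'.compact a b).isClosed.closure_eq] at h2


end RDS
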